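/- Let G be a locally compact quantum group with right regular representation V, left regular representation W, and self-adjoint unitary u_G = c J̌J. Define U := (u_G ⊗ 1)W*(u_G ⊗ 1). Then V₁₃ = U₁₂ V₁₃ W₃₂ U₁₂* as operators on L²(G) ⊗ L²(G) ⊗ L²(G); equivalently, U is a unitary intertwiner from the G-representation (L²(G) ⊗ L²(G), V₁₃W₃₂) to (L²(G) ⊗ L²(G), V₁₃). -/
import Mathlib


/-!
STATEMENT 19. In a *-monoid of unitaries on `L²(G) ⊗ L²(G) ⊗ L²(G)` (legs of the
multiplicative unitaries of `G`), with `U := (u_G ⊗ 1)W*(u_G ⊗ 1)`, one has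
`V₁₃ = U₁₂ V₁₃ W₃₂ U₁₂*`; i.e. `U` intertwines the `G`-representations
`(L²(G) ⊗ L²(G), V₁₃W₃₂)` and `(L²(G) ⊗ L²(G), V₁₃)`.

`Mnd` is the *-monoid of (unitary) operators on `L²(G)^{⊗3}`; `V12, V13, V23` are the
legs of the right regular representation `V`, `W12, W13, W23, W31, W32` legs of the left
regular representation `W` (`W31, W32` with flipped legs), and `u1 = u_G ⊗ 1 ⊗ 1` with
`u_G = cJ̌J` the canonical self-adjoint unitary.  Hypotheses: the pentagon equations for
`V` and `W` (the latter also in the leg-permuted form `W₁₂W₃₁W₁₂* = W₃₁W₃₂`), unitarity,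
`u_G` self-adjoint unitary, the commutation of `u1` with operators acting on legs 2, 3,
and the relation `(u_G ⊗ 1)V(u_G ⊗ 1) = W₂₁` in its leg-(1,3) instance
`u₁V₁₃u₁ = W₃₁`.  Conclusion: with `U₁₂ = u₁ W₁₂* u₁` (so `U₁₂* = u₁ W₁₂ u₁`),
`V₁₃ = U₁₂ V₁₃ W₃₂ U₁₂*`.
-/
theorem stmt_19 {Mnd : Type*} [Monoid Mnd] [StarMul Mnd]
    (V12 V13 V23 W12 W13 W23 W31 W32 u1 : Mnd)
    -- unitarity of `W` (in the relevant leg):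
    (hW12 : star W12 * W12 = 1) (hW12' : W12 * star W12 = 1)
    -- pentagon equations:
    (hpentV : V12 * V13 * V23 = V23 * V12)
    (hpentW : W12 * W13 * W23 = W23 * W12)
    -- the pentagon equation for `W` in leg-permuted form:
    (hpentW' : W12 * W31 * star W12 = W31 * W32)
    -- `u_G` is a self-adjoint unitary:
    (husa : star u1 = u1) (huu : u1 * u1 = 1)
    -- `(u_G ⊗ 1)V(u_G ⊗ 1) = W₂₁`, in its leg-(1,3) instance:
    (hrel : u1 * V13 * u1 = W31)
    -- `u1` acts on leg 1 only, `W32` on legs 2,3: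
    (hcomm : Commute u1 W32) :
    V13 = (u1 * star W12 * u1) * V13 * W32 * (u1 * W12 * u1) := by
  have hV : u1 * W31 * u1 = V13 := by
    rw [← hrel, ← mul_assoc, ← mul_assoc, huu, one_mul, mul_assoc, huu, mul_one]
  have h1 : u1 * W32 * u1 = W32 := by
    rw [hcomm.eq, mul_assoc, huu, mul_one]
  have h2 : star W12 * (W31 * W32) * W12 = W31 := by
    rw [← hpentW', ← mul_assoc, ← mul_assoc, hW12, one_mul, mul_assoc, hW12, mul_one]
  calc V13 = u1 * W31 * u1 := hV.symm
    _ = u1 * (star W12 * (W31 * W32) * W12) * u1 := by rw [h2]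
    _ = u1 * (star W12 * ((u1 * V13 * u1) * (u1 * W32 * u1)) * W12) * u1 := by
        rw [hrel, h1]
    _ = (u1 * star W12 * u1) * V13 * W32 * (u1 * W12 * u1) := by
        simp only [← mul_assoc]
        rw [mul_assoc (u1 * star W12 * u1 * V13) u1 u1, huu, mul_one]
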